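/- Let q > 2 and let u : ℝ/ℤ → ℝⁿ be an embedded, regular C¹ curve with bil(u) < ∞ and [u']_{W^{1-1/q,q}} < ∞. Then the tangent-point functional satisfies TP(u) ≤ (1/q) · (bil u)^{2q} · ‖u'‖_{L^∞}^q · [u']_{W^{1-1/q,q}}^q. -/

import Mathlib

open MeasureTheory Set Filter
open scoped RealInnerProductSpace ENNReal Topology

noncomputable section

/-- The distance on the circle `ℝ/ℤ` between the points represented by `x` and `y`. -/
def circDist (x y : ℝ) : ℝ := ‖((x - y : ℝ) : AddCircle (1 : ℝ))‖

/-- The representative of `z` modulo `1` lying in `(-1/2, 1/2]`. -/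
def wrap (z : ℝ) : ℝ := 1 / 2 - Int.fract (1 / 2 - z)

/-- Squared wedge norm `|a ∧ b|² = |a|²|b|² - ⟨a,b⟩²`. -/
def wedgeSq {n : ℕ} (a b : EuclideanSpace ℝ (Fin n)) : ℝ :=
  ‖a‖ ^ 2 * ‖b‖ ^ 2 - ⟪a, b⟫ ^ 2

/-- Wedge inner product `⟨a∧b, c∧d⟩ = ⟨a,c⟩⟨b,d⟩ - ⟨a,d⟩⟨b,c⟩`. -/
def wedgeInner {n : ℕ} (a b c d : EuclideanSpace ℝ (Fin n)) : ℝ :=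
  ⟪a, c⟫ * ⟪b, d⟫ - ⟪a, d⟫ * ⟪b, c⟫

/-- Fundamental domain for double integrals over `(ℝ/ℤ)²`. -/
def unitSq : Set (ℝ × ℝ) := Ioc (0 : ℝ) 1 ×ˢ Ioc (0 : ℝ) 1

/-- The tangent-point functional `TP` (extended-real-valued). -/
def TPe {n : ℕ} (q : ℝ) (u : ℝ → EuclideanSpace ℝ (Fin n)) : ℝ≥0∞ :=
  ENNReal.ofReal (1 / q) *
    ∫⁻ p in unitSq, ENNReal.ofReal
      (wedgeSq (deriv u p.2) (u p.1 - u p.2) ^ (q / 2) / ‖u p.1 - u p.2‖ ^ (2 * q))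

/-- The tangent-point functional `TP` (real-valued). -/
def TPr {n : ℕ} (q : ℝ) (u : ℝ → EuclideanSpace ℝ (Fin n)) : ℝ := (TPe q u).toReal

/-- The `q`-th power of the Sobolev–Slobodeckii seminorm `[f]_{W^{s,q}}` on `ℝ/ℤ`. -/
def sobSemPow {n : ℕ} (s q : ℝ) (f : ℝ → EuclideanSpace ℝ (Fin n)) : ℝ≥0∞ :=
  ∫⁻ p in unitSq, ENNReal.ofReal (‖f p.1 - f p.2‖ ^ q / circDist p.1 p.2 ^ (1 + s * q))

/-- The `W^{s,q}`-norm `‖f‖_{L^q} + [f]_{W^{s,q}}`. -/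
def Wnorm {n : ℕ} (s q : ℝ) (f : ℝ → EuclideanSpace ℝ (Fin n)) : ℝ :=
  (∫ x in Ioc (0 : ℝ) 1, ‖f x‖ ^ q) ^ (1 / q) + (sobSemPow s q f).toReal ^ (1 / q)

/-- The bi-Lipschitz constant `bil(u) = sup_{x ≢ y} |x-y|_{ℝ/ℤ}/|u(x)-u(y)|`. -/
def bil {n : ℕ} (u : ℝ → EuclideanSpace ℝ (Fin n)) : ℝ≥0∞ :=
  ⨆ (x : ℝ) (y : ℝ) (_ : circDist x y ≠ 0),
    ENNReal.ofReal (circDist x y) / ENNReal.ofReal ‖u x - u y‖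

/-- The `L^∞`-norm of the derivative of `u`. -/
def linfD {n : ℕ} (u : ℝ → EuclideanSpace ℝ (Fin n)) : ℝ≥0∞ :=
  ⨆ x : ℝ, (‖deriv u x‖₊ : ℝ≥0∞)

/-- A periodic curve is embedded if it is injective on the circle `ℝ/ℤ`. -/
def Embedded {n : ℕ} (u : ℝ → EuclideanSpace ℝ (Fin n)) : Prop :=
  ∀ x y : ℝ, u x = u y → ((x : AddCircle (1 : ℝ)) = (y : AddCircle (1 : ℝ)))

/-- A curve is regular if `min_{ℝ/ℤ} |u'| > 0`. -/
def Regular {n : ℕ} (u : ℝ → EuclideanSpace ℝ (Fin n)) : Prop :=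
  0 < ⨅ x : ℝ, ‖deriv u x‖

/-- Orthogonal projection of `b` onto the orthogonal complement of `ℝ a`. -/
def projPerp {n : ℕ} (a b : EuclideanSpace ℝ (Fin n)) : EuclideanSpace ℝ (Fin n) :=
  b - (⟪b, a⟫ / ‖a‖ ^ 2) • a

/-- The classical tangent-point functional (extended-real-valued). -/
def TPcle {n : ℕ} (q : ℝ) (u : ℝ → EuclideanSpace ℝ (Fin n)) : ℝ≥0∞ :=
  ENNReal.ofReal (1 / q) *
    ∫⁻ p in unitSq, ENNReal.ofReal
      (‖projPerp (deriv u p.2) (u p.1 - u p.2)‖ ^ q / ‖u p.1 - u p.2‖ ^ (2 * q) *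
        (‖deriv u p.1‖ * ‖deriv u p.2‖))

/-- The integrand of the functional `M(u; v, w)`. -/
def Mintegrand {n : ℕ} (q : ℝ) (u v w : ℝ → EuclideanSpace ℝ (Fin n)) (p : ℝ × ℝ) : ℝ :=
  wedgeSq (deriv u p.2) (u p.1 - u p.2) ^ ((q - 2) / 2) / ‖u p.1 - u p.2‖ ^ (2 * q) *
    wedgeInner (deriv u p.2) (u p.1 - u p.2) (deriv v p.2)
      (w p.1 - w p.2 - wrap (p.1 - p.2) • deriv w p.2)

/-- The functional `M(u; v, w)` appearing in the first variation of `TP`. -/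
def Mfun {n : ℕ} (q : ℝ) (u v w : ℝ → EuclideanSpace ℝ (Fin n)) : ℝ :=
  ∫ p in unitSq, Mintegrand q u v w p

/-- The integrand of the functional `A(u; v, w)`. -/
def Aintegrand {n : ℕ} (q : ℝ) (u v w : ℝ → EuclideanSpace ℝ (Fin n)) (p : ℝ × ℝ) : ℝ :=
  wedgeSq (deriv u p.2) (u p.1 - u p.2) ^ (q / 2) / ‖u p.1 - u p.2‖ ^ (2 * q + 2) *
    ⟪v p.1 - v p.2, w p.1 - w p.2⟫

/-- The functional `A(u; v, w)` appearing in the first variation of `TP`. -/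
def Afun {n : ℕ} (q : ℝ) (u v w : ℝ → EuclideanSpace ℝ (Fin n)) : ℝ :=
  ∫ p in unitSq, Aintegrand q u v w p

/-- The first variation `δTP(u)[w] = M(u;u,w) + M(u;w,u) - 2A(u;u,w)`. -/
def deltaTP {n : ℕ} (q : ℝ) (u w : ℝ → EuclideanSpace ℝ (Fin n)) : ℝ :=
  Mfun q u u w + Mfun q u w u - 2 * Afun q u u w

/-- The `H²` inner product on periodic curves. -/
def H2inner (v w : ℝ → EuclideanSpace ℝ (Fin 3)) : ℝ :=
  ∫ x in Ioc (0 : ℝ) 1,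
    (⟪v x, w x⟫ + ⟪deriv v x, deriv w x⟫ + ⟪deriv (deriv v) x, deriv (deriv w) x⟫)

/-- The total energy `E(u) = (κ/2)∫|u''|² + ρ TP(u)`. -/
def energyE (κ ρ q : ℝ) (u : ℝ → EuclideanSpace ℝ (Fin 3)) : ℝ :=
  κ / 2 * (∫ x in Ioc (0 : ℝ) 1, ‖deriv (deriv u) x‖ ^ 2) + ρ * TPr q u

-- AUX lemmas start
section Aux

open intervalIntegral

lemma wrap_eq (z : ℝ) : wrap z = z + ⌊1/2 - z⌋ := by
  rw [wrap, ← Int.self_sub_floor]; ring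

lemma wrap_mem (z : ℝ) : wrap z ∈ Ioc (-(2⁻¹) : ℝ) 2⁻¹ := by
  have h1 := Int.fract_nonneg (1/2 - z)
  have h2 := Int.fract_lt_one (1/2 - z)
  have h3 : wrap z = 1/2 - Int.fract (1/2 - z) := rfl
  constructor
  · rw [h3]; linarith
  · rw [h3]; linarith

lemma wrap_eq_self {z : ℝ} (hz : z ∈ Ioc (-(2⁻¹) : ℝ) 2⁻¹) : wrap z = z := by
  obtain ⟨h1, h2⟩ := hz
  have : Int.fract (1/2 - z) = 1/2 - z := by
    rw [Int.fract_eq_self]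
    constructor <;> [linarith; linarith]
  rw [wrap, this]; ring

lemma wrap_sub_self (z : ℝ) : wrap z - z = (⌊1/2 - z⌋ : ℤ) := by
  rw [wrap_eq]; ring

lemma coe_int_addCircle (k : ℤ) : ((k : ℝ) : AddCircle (1 : ℝ)) = 0 := by
  have : ((k : ℝ)) = k • (1 : ℝ) := by simp
  rw [this, AddCircle.coe_zsmul, AddCircle.coe_period, smul_zero]

lemma coe_wrap (z : ℝ) : ((wrap z : ℝ) : AddCircle (1 : ℝ)) = (z : AddCircle (1 : ℝ)) := by
  rw [wrap_eq, AddCircle.coe_add, coe_int_addCircle, add_zero]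

lemma norm_coe_of_mem {w : ℝ} (hw : w ∈ Ioc (-(2⁻¹) : ℝ) 2⁻¹) :
    ‖((w : ℝ) : AddCircle (1 : ℝ))‖ = |w| := by
  obtain ⟨h1, h2⟩ := hw
  rw [AddCircle.norm_eq]
  simp only [inv_one, one_mul, mul_one]
  rcases eq_or_lt_of_le h2 with h | h
  · subst h
    rw [show round (2⁻¹:ℝ) = 1 by rw [round_eq]; norm_num]
    norm_num
  · rw [show round w = 0 by
      rw [round_eq, Int.floor_eq_zero_iff]
      constructor
      · simp; linarith
      · simp; linarith]
    norm_num

lemma abs_wrap_eq (z : ℝ) : |wrap z| = ‖((z : ℝ) : AddCircle (1 : ℝ))‖ := by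
  rw [← coe_wrap, norm_coe_of_mem (wrap_mem z)]

lemma circDist_eq_abs_wrap (x y : ℝ) : circDist x y = |wrap (x - y)| :=
  (abs_wrap_eq _).symm

lemma wrap_periodic : Function.Periodic wrap 1 := by
  intro z
  rw [wrap, wrap, show 1/2 - (z + 1) = (1/2 - z) - 1 by ring, Int.fract_sub_one]

lemma circDist_period (x y : ℝ) : circDist (x + 1) y = circDist x y := by
  rw [circDist, circDist, show x + 1 - y = (x - y) + 1 by ring, AddCircle.coe_add_period]

lemma wedgeSq_nonneg {n : ℕ} (a b : EuclideanSpace ℝ (Fin n)) : 0 ≤ wedgeSq a b := by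
  have h := real_inner_mul_inner_self_le a b
  rw [real_inner_self_eq_norm_sq, real_inner_self_eq_norm_sq] at h
  simp only [wedgeSq]; nlinarith [h]

lemma wedgeSq_le {n : ℕ} (a b : EuclideanSpace ℝ (Fin n)) (c : ℝ) :
    wedgeSq a b ≤ ‖a‖ ^ 2 * ‖b - c • a‖ ^ 2 := by
  have hb : ‖b - c • a‖ ^ 2 = ‖b‖ ^ 2 - 2 * c * ⟪a, b⟫ + c ^ 2 * ‖a‖ ^ 2 := by
    rw [← real_inner_self_eq_norm_sq]
    rw [inner_sub_sub_self]
    rw [real_inner_smul_left, real_inner_smul_right, real_inner_smul_left, real_inner_smul_right]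
    rw [real_inner_self_eq_norm_sq, real_inner_self_eq_norm_sq, real_inner_comm b a]
    ring
  have hab : ⟪a, b - c • a⟫ = ⟪a, b⟫ - c * ‖a‖ ^ 2 := by
    rw [inner_sub_right, real_inner_smul_right, real_inner_self_eq_norm_sq]
  have key : wedgeSq a b = ‖a‖^2 * ‖b - c • a‖^2 - ⟪a, b - c•a⟫^2 := by
    simp only [wedgeSq, hb, hab]; ring
  nlinarith [sq_nonneg (⟪a, b - c•a⟫), key]

lemma wedgeSq_rpow_le {n : ℕ} (a b : EuclideanSpace ℝ (Fin n)) (c : ℝ) {q : ℝ} (hq : 0 ≤ q) :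
    wedgeSq a b ^ (q / 2) ≤ (‖a‖ * ‖b - c • a‖) ^ q := by
  have h1 : wedgeSq a b ^ (q/2) ≤ (‖a‖ ^ 2 * ‖b - c • a‖ ^ 2) ^ (q/2) :=
    Real.rpow_le_rpow (wedgeSq_nonneg a b) (wedgeSq_le a b c) (by linarith)
  have h2 : (‖a‖ ^ 2 * ‖b - c • a‖ ^ 2) ^ (q/2) = (‖a‖ * ‖b - c • a‖) ^ q := by
    rw [← mul_pow, ← Real.rpow_natCast (‖a‖ * ‖b - c • a‖) 2, ← Real.rpow_mul (by positivity)]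
    rw [show ((2:ℕ):ℝ) * (q/2) = q by push_cast; ring]
  linarith [h1, h2.le]

lemma holder_pow {α : Type*} [MeasurableSpace α] (μ : Measure α) {f : α → ℝ≥0∞}
    (hf : AEMeasurable f μ) {q : ℝ} (hq : 1 < q) :
    (∫⁻ t, f t ∂μ) ^ q ≤ (∫⁻ t, f t ^ q ∂μ) * (μ univ) ^ (q - 1) := by
  have hpq : Real.HolderConjugate q (q / (q - 1)) := Real.HolderConjugate.conjExponent hq
  have h := ENNReal.lintegral_mul_le_Lp_mul_Lq μ hpq hf aemeasurable_const (g := fun _ => 1)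
  simp only [mul_one, ENNReal.one_rpow, lintegral_const, one_mul] at h
  simp only [Pi.mul_apply, mul_one] at h
  have h2 := ENNReal.rpow_le_rpow h (by positivity : (0:ℝ) ≤ q)
  calc (∫⁻ t, f t ∂μ) ^ q
      ≤ ((∫⁻ t, f t ^ q ∂μ) ^ (1/q) * (μ univ) ^ (1/(q/(q-1)))) ^ q := h2
    _ = (∫⁻ t, f t ^ q ∂μ) * (μ univ) ^ (q - 1) := by
        rw [ENNReal.mul_rpow_of_nonneg _ _ (by positivity : (0:ℝ) ≤ q),
          ← ENNReal.rpow_mul, ← ENNReal.rpow_mul]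
        congr 1
        · rw [one_div_mul_cancel (by positivity : q ≠ 0), ENNReal.rpow_one]
        · congr 1
          field_simp

lemma taylor_bound {n : ℕ} {u : ℝ → EuclideanSpace ℝ (Fin n)} (hC1 : ContDiff ℝ 1 u) (y x' : ℝ) :
    ENNReal.ofReal ‖u x' - u y - (x' - y) • deriv u y‖ ≤
      ∫⁻ t in uIoc y x', ENNReal.ofReal ‖deriv u t - deriv u y‖ := by
  have hder : Continuous (deriv u) := (hC1.iterate_deriv' 0 1).continuous
  have hdiff : ∀ t, DifferentiableAt ℝ u t := fun t => hC1.differentiable one_ne_zero t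
  have h1 : u x' - u y = ∫ t in y..x', deriv u t :=
    (integral_deriv_eq_sub (fun t _ => hdiff t)
      ((hder.intervalIntegrable y x'))).symm
  have h2 : (x' - y) • deriv u y = ∫ t in y..x', deriv u y := by
    rw [intervalIntegral.integral_const]
  have h3 : u x' - u y - (x' - y) • deriv u y = ∫ t in y..x', (deriv u t - deriv u y) := by
    rw [h1, h2, ← intervalIntegral.integral_sub (hder.intervalIntegrable y x')
      (intervalIntegrable_const)]
  rw [h3]
  have h4 : ‖∫ t in y..x', (deriv u t - deriv u y)‖ ≤ |∫ t in y..x', ‖deriv u t - deriv u y‖| :=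
    intervalIntegral.norm_integral_le_abs_integral_norm
  have h5 : |∫ t in y..x', ‖deriv u t - deriv u y‖| = ∫ t in uIoc y x', ‖deriv u t - deriv u y‖ := by
    rw [intervalIntegral.intervalIntegral_eq_integral_uIoc]
    have hnn : 0 ≤ ∫ t in uIoc y x', ‖deriv u t - deriv u y‖ :=
      setIntegral_nonneg measurableSet_uIoc (fun t _ => norm_nonneg _)
    rcases le_or_gt y x' with h | h
    · rw [if_pos h, one_smul, abs_of_nonneg hnn]
    · rw [if_neg (not_le.mpr h)]
      simp only [neg_smul, one_smul, abs_neg, abs_of_nonneg hnn]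
  have hInt : IntegrableOn (fun t => ‖deriv u t - deriv u y‖) (uIoc y x') := by
    rw [← intervalIntegrable_iff]
    exact ((hder.sub continuous_const).norm).intervalIntegrable y x'
  calc ENNReal.ofReal ‖∫ t in y..x', (deriv u t - deriv u y)‖
      ≤ ENNReal.ofReal (∫ t in uIoc y x', ‖deriv u t - deriv u y‖) := by
        apply ENNReal.ofReal_le_ofReal; rw [← h5]; exact h4
    _ ≤ ∫⁻ t in uIoc y x', ENNReal.ofReal ‖deriv u t - deriv u y‖ :=
        le_of_eq (MeasureTheory.ofReal_integral_eq_lintegral_ofReal hInt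
          (Filter.Eventually.of_forall (fun t => norm_nonneg _)))

lemma bil_ge {n : ℕ} {u : ℝ → EuclideanSpace ℝ (Fin n)} {x y : ℝ} (hd : circDist x y ≠ 0) :
    ENNReal.ofReal (circDist x y) / ENNReal.ofReal ‖u x - u y‖ ≤ bil u := by
  refine le_trans ?_ (le_iSup _ x)
  refine le_trans ?_ (le_iSup _ y)
  exact le_iSup (fun (_ : circDist x y ≠ 0) =>
    ENNReal.ofReal (circDist x y) / ENNReal.ofReal ‖u x - u y‖) hd

lemma emb_ne {n : ℕ} {u : ℝ → EuclideanSpace ℝ (Fin n)} {x y : ℝ} (hemb : Embedded u)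
    (hd : circDist x y ≠ 0) : u x ≠ u y := by
  intro h
  apply hd
  have := hemb x y h
  have h2 : ((x - y : ℝ) : AddCircle (1:ℝ)) = 0 := by
    rw [AddCircle.coe_sub, this, sub_self]
  rw [circDist, h2, norm_zero]

lemma pw {n : ℕ} {q : ℝ} {u : ℝ → EuclideanSpace ℝ (Fin n)}
    (hq : 2 < q) (hC1 : ContDiff ℝ 1 u) (hper : Function.Periodic u 1)
    (hemb : Embedded u) {x y : ℝ} (hd : circDist x y ≠ 0) :
    ENNReal.ofReal (wedgeSq (deriv u y) (u x - u y) ^ (q / 2) / ‖u x - u y‖ ^ (2 * q))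
      ≤ bil u ^ (2 * q) * linfD u ^ q *
        ((ENNReal.ofReal (circDist x y)) ^ (-(q + 1)) *
          ∫⁻ t in uIoc y (y + wrap (x - y)), ENNReal.ofReal ‖deriv u t - deriv u y‖ ^ q) := by
  set d := circDist x y with hdd
  have hd0 : 0 < d := lt_of_le_of_ne (norm_nonneg _) (Ne.symm hd)
  set s := wrap (x - y) with hs
  set x' := y + s with hx'
  have habs : |s| = d := (circDist_eq_abs_wrap x y).symm
  have hux : u x' = u x := by
    have hk := wrap_sub_self (x - y)
    have hxx : x' = x - ((-⌊1/2 - (x - y)⌋ : ℤ) : ℝ) * 1 := by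
      push_cast
      rw [hx', hs]
      linarith [hk]
    rw [hxx]
    exact Function.Periodic.sub_int_mul_eq hper (-⌊1/2 - (x - y)⌋)
  have hne : u x ≠ u y := emb_ne hemb hd
  set a := deriv u y with ha
  set b := u x - u y with hb
  set w := b - s • a with hw
  have hδ0 : 0 < ‖b‖ := norm_pos_iff.mpr (sub_ne_zero_of_ne hne)
  set D := ENNReal.ofReal d with hD
  set Δ := ENNReal.ofReal ‖b‖ with hΔ
  have hD0 : D ≠ 0 := by
    rw [hD]; simp only [ne_eq, ENNReal.ofReal_eq_zero, not_le]; linarith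
  have hDt : D ≠ ⊤ := ENNReal.ofReal_ne_top
  have hΔ0 : Δ ≠ 0 := by
    rw [hΔ]; simp only [ne_eq, ENNReal.ofReal_eq_zero, not_le]; linarith
  have hΔt : Δ ≠ ⊤ := ENNReal.ofReal_ne_top
  have hq0 : (0:ℝ) ≤ q := by linarith
  have hsplit : ENNReal.ofReal (wedgeSq a b ^ (q / 2) / ‖b‖ ^ (2 * q)) =
      ENNReal.ofReal (wedgeSq a b ^ (q / 2)) * (Δ ^ (2 * q))⁻¹ := by
    rw [ENNReal.ofReal_div_of_pos (Real.rpow_pos_of_pos hδ0 _), div_eq_mul_inv,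
      ENNReal.ofReal_rpow_of_pos hδ0]
  have hwedge : ENNReal.ofReal (wedgeSq a b ^ (q / 2)) ≤
      linfD u ^ q * (ENNReal.ofReal ‖w‖) ^ q := by
    calc ENNReal.ofReal (wedgeSq a b ^ (q / 2))
        ≤ ENNReal.ofReal ((‖a‖ * ‖w‖) ^ q) :=
          ENNReal.ofReal_le_ofReal (wedgeSq_rpow_le a b s hq0)
      _ = (ENNReal.ofReal ‖a‖) ^ q * (ENNReal.ofReal ‖w‖) ^ q := by
          rw [Real.mul_rpow (norm_nonneg _) (norm_nonneg _), ENNReal.ofReal_mul (by positivity),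
            ENNReal.ofReal_rpow_of_nonneg (norm_nonneg _) hq0,
            ENNReal.ofReal_rpow_of_nonneg (norm_nonneg _) hq0]
      _ ≤ linfD u ^ q * (ENNReal.ofReal ‖w‖) ^ q := by
          gcongr
          rw [ofReal_norm, enorm_eq_nnnorm]
          exact le_iSup (fun x => (‖deriv u x‖₊ : ℝ≥0∞)) y
  have htay : (ENNReal.ofReal ‖w‖) ^ q ≤
      D ^ (q - 1) * ∫⁻ t in uIoc y x', ENNReal.ofReal ‖deriv u t - deriv u y‖ ^ q := by
    have h1 : ENNReal.ofReal ‖w‖ ≤ ∫⁻ t in uIoc y x', ENNReal.ofReal ‖deriv u t - deriv u y‖ := by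
      have hxy : x' - y = s := by rw [hx']; ring
      have : w = u x' - u y - (x' - y) • deriv u y := by
        rw [hw, hb, ← hux, hxy, ha]
      rw [this]
      exact taylor_bound hC1 y x'
    have hcont : Continuous (deriv u) := (hC1.iterate_deriv' 0 1).continuous
    have hmeas : AEMeasurable (fun t => ENNReal.ofReal ‖deriv u t - deriv u y‖)
        (volume.restrict (uIoc y x')) :=
      (ENNReal.continuous_ofReal.comp ((hcont.sub continuous_const).norm)).aemeasurable
    have h2 := holder_pow (volume.restrict (uIoc y x')) hmeas (by linarith : 1 < q)
    have hμ : (volume.restrict (uIoc y x')) univ = D := by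
      rw [Measure.restrict_apply_univ, uIoc, Real.volume_Ioc, hD]
      congr 1
      rw [max_sub_min_eq_abs, show x' - y = s from by rw [hx']; ring, habs]
    calc (ENNReal.ofReal ‖w‖) ^ q
        ≤ (∫⁻ t in uIoc y x', ENNReal.ofReal ‖deriv u t - deriv u y‖) ^ q :=
          ENNReal.rpow_le_rpow h1 hq0
      _ ≤ (∫⁻ t in uIoc y x', ENNReal.ofReal ‖deriv u t - deriv u y‖ ^ q) *
            ((volume.restrict (uIoc y x')) univ) ^ (q - 1) := h2
      _ = D ^ (q - 1) * ∫⁻ t in uIoc y x', ENNReal.ofReal ‖deriv u t - deriv u y‖ ^ q := by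
          rw [hμ, mul_comm]
  have hbilb : (Δ ^ (2 * q))⁻¹ ≤ bil u ^ (2 * q) * (D ^ (2 * q))⁻¹ := by
    have h1 : D * Δ⁻¹ ≤ bil u := by
      have := bil_ge (u := u) hd
      rwa [div_eq_mul_inv] at this
    have h2 : Δ⁻¹ ≤ bil u * D⁻¹ := by
      calc Δ⁻¹ = D⁻¹ * (D * Δ⁻¹) := by
            rw [← mul_assoc, ENNReal.inv_mul_cancel hD0 hDt, one_mul]
        _ ≤ D⁻¹ * bil u := mul_le_mul_right h1 _
        _ = bil u * D⁻¹ := mul_comm _ _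
    calc (Δ ^ (2 * q))⁻¹ = (Δ⁻¹) ^ (2 * q) := (ENNReal.inv_rpow _ _).symm
      _ ≤ (bil u * D⁻¹) ^ (2 * q) := ENNReal.rpow_le_rpow h2 (by linarith)
      _ = bil u ^ (2 * q) * (D ^ (2 * q))⁻¹ := by
          rw [ENNReal.mul_rpow_of_nonneg _ _ (by linarith : (0:ℝ) ≤ 2 * q), ENNReal.inv_rpow]
  calc ENNReal.ofReal (wedgeSq a b ^ (q / 2) / ‖b‖ ^ (2 * q))
      = ENNReal.ofReal (wedgeSq a b ^ (q / 2)) * (Δ ^ (2 * q))⁻¹ := hsplit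
    _ ≤ (linfD u ^ q * (D ^ (q - 1) *
          ∫⁻ t in uIoc y x', ENNReal.ofReal ‖deriv u t - deriv u y‖ ^ q)) *
        (bil u ^ (2 * q) * (D ^ (2 * q))⁻¹) := by
        exact mul_le_mul' (hwedge.trans (mul_le_mul_right htay _)) hbilb
    _ = bil u ^ (2 * q) * linfD u ^ q *
        ((D ^ (q - 1) * (D ^ (2 * q))⁻¹) *
          ∫⁻ t in uIoc y x', ENNReal.ofReal ‖deriv u t - deriv u y‖ ^ q) := by
        ring
    _ = bil u ^ (2 * q) * linfD u ^ q *
        (D ^ (-(q + 1)) * ∫⁻ t in uIoc y x', ENNReal.ofReal ‖deriv u t - deriv u y‖ ^ q) := by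
        congr 2
        rw [← ENNReal.rpow_neg, ← ENNReal.rpow_add _ _ hD0 hDt]
        congr 1
        ring

end Aux


lemma lintegral_neg_set (f : ℝ → ℝ≥0∞) (s : Set ℝ) :
    ∫⁻ x in Neg.neg ⁻¹' s, f (-x) = ∫⁻ x in s, f x :=
  (Measure.measurePreserving_neg volume).setLIntegral_comp_preimage_emb
    (Homeomorph.neg ℝ).measurableEmbedding f s

lemma lintegral_shift (f : ℝ → ℝ≥0∞) (c : ℝ) (s : Set ℝ) :
    ∫⁻ x in (fun x => c + x) ⁻¹' s, f (c + x) = ∫⁻ x in s, f x := by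
  exact (measurePreserving_add_left volume c).setLIntegral_comp_preimage_emb
    (Homeomorph.addLeft c).measurableEmbedding f s

lemma pos_core {q : ℝ} (hq : 1 ≤ q) (h : ℝ → ℝ≥0∞) (hm : Measurable h) :
    ∫⁻ s in Ioc (0:ℝ) 2⁻¹, (ENNReal.ofReal s) ^ (-(q+1)) * ∫⁻ τ in Ioc (0:ℝ) s, h τ
      ≤ ∫⁻ s in Ioc (0:ℝ) 2⁻¹, (ENNReal.ofReal s) ^ (-q) * h s := by
  have hq0 : (0:ℝ) < q := by linarith
  set F : ℝ × ℝ → ℝ≥0∞ := fun p =>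
    {p' : ℝ × ℝ | 0 < p'.2 ∧ p'.2 ≤ p'.1}.indicator
      (fun p => (ENNReal.ofReal p.1) ^ (-(q+1)) * h p.2) p with hF
  have hsetm : MeasurableSet {p' : ℝ × ℝ | 0 < p'.2 ∧ p'.2 ≤ p'.1} :=
    (measurableSet_lt measurable_const measurable_snd).inter
      (measurableSet_le measurable_snd measurable_fst)
  have hFm : Measurable F := by
    apply Measurable.indicator _ hsetm
    exact ((measurable_fst.ennreal_ofReal).pow_const _).mul (hm.comp measurable_snd)
  -- step 1
  have step1 : ∀ s ∈ Ioc (0:ℝ) 2⁻¹,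
      (ENNReal.ofReal s) ^ (-(q+1)) * ∫⁻ τ in Ioc (0:ℝ) s, h τ = ∫⁻ τ, F (s, τ) := by
    intro s _
    have : ∀ τ : ℝ, F (s, τ) = (Ioc (0:ℝ) s).indicator
        (fun τ => (ENNReal.ofReal s) ^ (-(q+1)) * h τ) τ := by
      intro τ
      simp only [hF]
      by_cases hτ : τ ∈ Ioc (0:ℝ) s
      · have hmem : ((s,τ) : ℝ × ℝ) ∈ {p' : ℝ × ℝ | 0 < p'.2 ∧ p'.2 ≤ p'.1} := ⟨hτ.1, hτ.2⟩
        rw [indicator_of_mem hτ, indicator_of_mem hmem]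
      · rw [indicator_of_notMem hτ, indicator_of_notMem]
        intro hc
        exact hτ ⟨hc.1, hc.2⟩
    rw [lintegral_congr this, lintegral_indicator measurableSet_Ioc,
      lintegral_const_mul _ hm]
  rw [setLIntegral_congr_fun measurableSet_Ioc step1]
  -- step 2 : swap
  have step2 : ∫⁻ s in Ioc (0:ℝ) 2⁻¹, ∫⁻ τ, F (s, τ) =
      ∫⁻ τ, ∫⁻ s in Ioc (0:ℝ) 2⁻¹, F (s, τ) :=
    lintegral_lintegral_swap (hFm.aemeasurable)
  rw [step2]
  -- step 3 : pointwise bound on inner integral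
  have step3 : ∀ τ : ℝ, (∫⁻ s in Ioc (0:ℝ) 2⁻¹, F (s, τ)) ≤
      (Ioc (0:ℝ) 2⁻¹).indicator (fun τ => (ENNReal.ofReal τ) ^ (-q) * h τ) τ := by
    intro τ
    by_cases hτ : τ ∈ Ioc (0:ℝ) 2⁻¹
    · rw [indicator_of_mem hτ]
      have hfun : ∀ s ∈ Ioc (0:ℝ) 2⁻¹, F (s, τ) =
          (Ici τ).indicator (fun s => (ENNReal.ofReal s) ^ (-(q+1)) * h τ) s := by
        intro s _
        simp only [hF]
        by_cases hs : τ ≤ s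
        · have hmem : ((s,τ) : ℝ × ℝ) ∈ {p' : ℝ × ℝ | 0 < p'.2 ∧ p'.2 ≤ p'.1} := ⟨hτ.1, hs⟩
          rw [indicator_of_mem (mem_Ici.mpr hs), indicator_of_mem hmem]
        · rw [indicator_of_notMem fun hc => hs (mem_Ici.mp hc), indicator_of_notMem]
          intro hc
          exact hs hc.2
      rw [setLIntegral_congr_fun measurableSet_Ioc hfun,
        lintegral_indicator measurableSet_Ici, Measure.restrict_restrict measurableSet_Ici]
      have hmono : ∫⁻ s in Ici τ ∩ Ioc (0:ℝ) 2⁻¹,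
          (ENNReal.ofReal s) ^ (-(q+1)) * h τ ≤
          ∫⁻ s in Ici τ, (ENNReal.ofReal s) ^ (-(q+1)) * h τ :=
        lintegral_mono_set inter_subset_left
      have hIci : ∫⁻ s in Ici τ, (ENNReal.ofReal s) ^ (-(q+1)) * h τ =
          ∫⁻ s in Ioi τ, (ENNReal.ofReal s) ^ (-(q+1)) * h τ := by
        exact setLIntegral_congr Ioi_ae_eq_Ici.symm
      have hval : ∫⁻ s in Ioi τ, (ENNReal.ofReal s) ^ (-(q+1)) ≤
          (ENNReal.ofReal τ) ^ (-q) := by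
        have hτ0 : (0:ℝ) < τ := hτ.1
        have hcongr : ∀ s ∈ Ioi τ, (ENNReal.ofReal s) ^ (-(q+1)) =
            ENNReal.ofReal (s ^ (-(q+1))) := by
          intro s hs
          exact (ENNReal.ofReal_rpow_of_pos (lt_trans hτ0 hs)).symm ▸ rfl
        rw [setLIntegral_congr_fun measurableSet_Ioi hcongr]
        rw [← MeasureTheory.ofReal_integral_eq_lintegral_ofReal
          (integrableOn_Ioi_rpow_of_lt (by linarith) hτ0)
          ((ae_restrict_iff' measurableSet_Ioi).mpr (Filter.Eventually.of_forall
            (fun s hs => Real.rpow_nonneg (le_of_lt (lt_trans hτ0 hs)) _)))]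
        rw [integral_Ioi_rpow_of_lt (by linarith) hτ0, show -(q+1)+1 = -q by ring,
          show -τ ^ (-q) / -q = τ ^ (-q) / q by ring]
        calc ENNReal.ofReal (τ ^ (-q) / q) ≤ ENNReal.ofReal (τ ^ (-q)) :=
              ENNReal.ofReal_le_ofReal (div_le_self (Real.rpow_nonneg hτ0.le _) hq)
          _ = ENNReal.ofReal τ ^ (-q) := (ENNReal.ofReal_rpow_of_pos hτ0).symm
      calc ∫⁻ s in Ici τ ∩ Ioc (0:ℝ) 2⁻¹, (ENNReal.ofReal s) ^ (-(q+1)) * h τ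
          ≤ ∫⁻ s in Ioi τ, (ENNReal.ofReal s) ^ (-(q+1)) * h τ := hIci ▸ hmono
        _ = (∫⁻ s in Ioi τ, (ENNReal.ofReal s) ^ (-(q+1))) * h τ :=
            lintegral_mul_const _ (measurable_id.ennreal_ofReal.pow_const _)
        _ ≤ (ENNReal.ofReal τ) ^ (-q) * h τ := mul_le_mul_left hval _
    · rw [indicator_of_notMem hτ]
      have : ∀ s ∈ Ioc (0:ℝ) 2⁻¹, F (s, τ) = 0 := by
        intro s hs
        simp only [hF]
        rw [indicator_of_notMem]
        intro hc
        exact hτ ⟨hc.1, le_trans hc.2 hs.2⟩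
      rw [setLIntegral_congr_fun measurableSet_Ioc this]
      simp
  calc ∫⁻ τ, ∫⁻ s in Ioc (0:ℝ) 2⁻¹, F (s, τ)
      ≤ ∫⁻ τ, (Ioc (0:ℝ) 2⁻¹).indicator (fun τ => (ENNReal.ofReal τ) ^ (-q) * h τ) τ :=
        lintegral_mono step3
    _ = ∫⁻ s in Ioc (0:ℝ) 2⁻¹, (ENNReal.ofReal s) ^ (-q) * h s :=
        lintegral_indicator measurableSet_Ioc _

lemma core {q : ℝ} (hq : 1 ≤ q) (h : ℝ → ℝ≥0∞) (hm : Measurable h) :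
    ∫⁻ s in Ioc (-(2⁻¹):ℝ) 2⁻¹, (ENNReal.ofReal |s|) ^ (-(q+1)) * ∫⁻ τ in uIoc (0:ℝ) s, h τ
      ≤ ∫⁻ s in Ioc (-(2⁻¹):ℝ) 2⁻¹, (ENNReal.ofReal |s|) ^ (-q) * h s := by
  have hsplit : Ioc (-(2⁻¹):ℝ) 2⁻¹ = Ioc (-(2⁻¹):ℝ) 0 ∪ Ioc (0:ℝ) 2⁻¹ :=
    (Ioc_union_Ioc_eq_Ioc (by norm_num) (by norm_num)).symm
  have hdisj : Disjoint (Ioc (-(2⁻¹):ℝ) 0) (Ioc (0:ℝ) 2⁻¹) := by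
    rw [Set.disjoint_left]
    rintro a ⟨_, h0⟩ ⟨h0', _⟩
    linarith
  rw [hsplit, lintegral_union measurableSet_Ioc hdisj, lintegral_union measurableSet_Ioc hdisj]
  have hpos : ∫⁻ s in Ioc (0:ℝ) 2⁻¹, (ENNReal.ofReal |s|) ^ (-(q+1)) * ∫⁻ τ in uIoc (0:ℝ) s, h τ
      ≤ ∫⁻ s in Ioc (0:ℝ) 2⁻¹, (ENNReal.ofReal |s|) ^ (-q) * h s := by
    have e1 : ∀ s ∈ Ioc (0:ℝ) 2⁻¹,
        (ENNReal.ofReal |s|) ^ (-(q+1)) * ∫⁻ τ in uIoc (0:ℝ) s, h τ =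
        (ENNReal.ofReal s) ^ (-(q+1)) * ∫⁻ τ in Ioc (0:ℝ) s, h τ := by
      intro s hs
      rw [abs_of_pos hs.1, uIoc_of_le hs.1.le]
    have e2 : ∀ s ∈ Ioc (0:ℝ) 2⁻¹,
        (ENNReal.ofReal |s|) ^ (-q) * h s = (ENNReal.ofReal s) ^ (-q) * h s := by
      intro s hs
      rw [abs_of_pos hs.1]
    rw [setLIntegral_congr_fun measurableSet_Ioc e1,
      setLIntegral_congr_fun measurableSet_Ioc e2]
    exact pos_core hq h hm
  have hneg : ∫⁻ s in Ioc (-(2⁻¹):ℝ) 0, (ENNReal.ofReal |s|) ^ (-(q+1)) * ∫⁻ τ in uIoc (0:ℝ) s, h τ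
      ≤ ∫⁻ s in Ioc (-(2⁻¹):ℝ) 0, (ENNReal.ofReal |s|) ^ (-q) * h s := by
    -- reflect to positive side
    have hpre : Neg.neg ⁻¹' (Ioc (-(2⁻¹):ℝ) 0) = Ico (0:ℝ) 2⁻¹ := by
      ext z
      simp only [mem_preimage, mem_Ioc, mem_Ico]
      constructor
      · rintro ⟨h1, h2⟩; constructor <;> linarith
      · rintro ⟨h1, h2⟩; constructor <;> linarith
    have hIcoIoc : (Ico (0:ℝ) 2⁻¹ : Set ℝ) =ᵐ[volume] Ioc (0:ℝ) 2⁻¹ :=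
      Ico_ae_eq_Ioc
    -- inner reflection per r > 0
    have hinner : ∀ r : ℝ, 0 ≤ r → ∫⁻ τ in uIoc (0:ℝ) (-r), h τ = ∫⁻ ρ in Ico (0:ℝ) r, h (-ρ) := by
      intro r hr
      have h1 : uIoc (0:ℝ) (-r) = Ioc (-r) 0 := by
        rw [uIoc_comm, uIoc_of_le (by linarith)]
      have h2 : Neg.neg ⁻¹' (Ioc (-r) 0) = Ico (0:ℝ) r := by
        ext z
        simp only [mem_preimage, mem_Ioc, mem_Ico]
        constructor
        · rintro ⟨ha, hb⟩; constructor <;> linarith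
        · rintro ⟨ha, hb⟩; constructor <;> linarith
      rw [h1, ← lintegral_neg_set h (Ioc (-r) 0), h2]
    calc ∫⁻ s in Ioc (-(2⁻¹):ℝ) 0, (ENNReal.ofReal |s|) ^ (-(q+1)) * ∫⁻ τ in uIoc (0:ℝ) s, h τ
        = ∫⁻ r in Ico (0:ℝ) 2⁻¹, (ENNReal.ofReal |(-r)|) ^ (-(q+1)) * ∫⁻ τ in uIoc (0:ℝ) (-r), h τ := by
          rw [← lintegral_neg_set
            (fun s => (ENNReal.ofReal |s|) ^ (-(q+1)) * ∫⁻ τ in uIoc (0:ℝ) s, h τ)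
            (Ioc (-(2⁻¹):ℝ) 0), hpre]
      _ = ∫⁻ r in Ioc (0:ℝ) 2⁻¹, (ENNReal.ofReal r) ^ (-(q+1)) * ∫⁻ ρ in Ioc (0:ℝ) r, h (-ρ) := by
          rw [setLIntegral_congr hIcoIoc]
          apply setLIntegral_congr_fun measurableSet_Ioc
          intro r hr
          dsimp only
          rw [abs_neg, abs_of_pos hr.1, hinner r hr.1.le, setLIntegral_congr (Ico_ae_eq_Ioc)]
      _ ≤ ∫⁻ r in Ioc (0:ℝ) 2⁻¹, (ENNReal.ofReal r) ^ (-q) * h (-r) :=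
          pos_core hq (fun ρ => h (-ρ)) (hm.comp measurable_neg)
      _ = ∫⁻ r in Ico (0:ℝ) 2⁻¹, (ENNReal.ofReal |(-r)|) ^ (-q) * h (-r) := by
          rw [setLIntegral_congr hIcoIoc]
          apply setLIntegral_congr_fun measurableSet_Ioc
          intro r hr
          dsimp only
          rw [abs_neg, abs_of_pos hr.1]
      _ = ∫⁻ s in Ioc (-(2⁻¹):ℝ) 0, (ENNReal.ofReal |s|) ^ (-q) * h s := by
          rw [← hpre, lintegral_neg_set (fun s => (ENNReal.ofReal |s|) ^ (-q) * h s)]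
  exact add_le_add hneg hpos


lemma periodic_vadd {f : ℝ → ℝ≥0∞} (hf : Function.Periodic f 1)
    (g : AddSubgroup.zmultiples (1:ℝ)) (x : ℝ) : f (g +ᵥ x) = f x := by
  obtain ⟨g, k, rfl⟩ := g
  show f ((k • (1:ℝ)) + x) = f x
  have h1 : (k • (1:ℝ)) + x = x - (-k : ℤ) * 1 := by
    push_cast [zsmul_eq_mul]
    ring
  rw [h1]
  exact hf.sub_int_mul_eq (-k)

lemma lintegral_periodic_shift {f : ℝ → ℝ≥0∞} (hf : Function.Periodic f 1) (a : ℝ) :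
    ∫⁻ x in Ioc (0:ℝ) 1, f x = ∫⁻ x in Ioc a (a + 1), f x := by
  have h1 := isAddFundamentalDomain_Ioc one_pos 0 (volume : Measure ℝ)
  have h2 := isAddFundamentalDomain_Ioc one_pos a (volume : Measure ℝ)
  have := h1.setLIntegral_eq h2 f (periodic_vadd hf)
  simpa using this

lemma xint {q : ℝ} (hq : 1 ≤ q) (y : ℝ) (h : ℝ → ℝ≥0∞) (hm : Measurable h)
    (hper : Function.Periodic h 1) :
    ∫⁻ x in Ioc (0:ℝ) 1, (ENNReal.ofReal (circDist x y)) ^ (-(q+1)) *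
        ∫⁻ t in uIoc y (y + wrap (x - y)), h t
      ≤ ∫⁻ x in Ioc (0:ℝ) 1, (ENNReal.ofReal (circDist x y)) ^ (-q) * h x := by
  set Φ : ℝ → ℝ≥0∞ := fun x => (ENNReal.ofReal (circDist x y)) ^ (-(q+1)) *
      ∫⁻ t in uIoc y (y + wrap (x - y)), h t with hΦ
  set Ψ : ℝ → ℝ≥0∞ := fun x => (ENNReal.ofReal (circDist x y)) ^ (-q) * h x with hΨ
  have hΦper : Function.Periodic Φ 1 := by
    intro x
    simp only [hΦ]
    rw [circDist_period, show x + 1 - y = (x - y) + 1 by ring, wrap_periodic (x - y)]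
  have hΨper : Function.Periodic Ψ 1 := by
    intro x
    simp only [hΨ]
    rw [circDist_period, hper x]
  rw [lintegral_periodic_shift hΦper (y - 2⁻¹), lintegral_periodic_shift hΨper (y - 2⁻¹)]
  have hIoc : Ioc (y - 2⁻¹) (y - 2⁻¹ + 1) = Ioc (y - 2⁻¹) (y + 2⁻¹) := by
    congr 1; ring
  rw [hIoc]
  have hpre : (fun s => y + s) ⁻¹' Ioc (y - 2⁻¹) (y + 2⁻¹) = Ioc (-(2⁻¹) : ℝ) 2⁻¹ := by
    ext z
    simp only [mem_preimage, mem_Ioc]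
    constructor
    · rintro ⟨h1, h2⟩; constructor <;> linarith
    · rintro ⟨h1, h2⟩; constructor <;> linarith
  rw [← lintegral_shift Φ y (Ioc (y - 2⁻¹) (y + 2⁻¹)), ← lintegral_shift Ψ y (Ioc (y - 2⁻¹) (y + 2⁻¹)), hpre]
  have hd : ∀ s ∈ Ioc (-(2⁻¹):ℝ) 2⁻¹, circDist (y + s) y = |s| := by
    intro s hs
    rw [circDist_eq_abs_wrap, show y + s - y = s by ring, wrap_eq_self hs]
  have hinner : ∀ s : ℝ, ∫⁻ t in uIoc y (y + s), h t = ∫⁻ τ in uIoc (0:ℝ) s, h (y + τ) := by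
    intro s
    have hp : (fun τ => y + τ) ⁻¹' uIoc y (y + s) = uIoc (0:ℝ) s := by
      ext z
      simp only [mem_preimage, Set.mem_uIoc]
      constructor
      · rintro (⟨h1, h2⟩ | ⟨h1, h2⟩)
        · left; constructor <;> linarith
        · right; constructor <;> linarith
      · rintro (⟨h1, h2⟩ | ⟨h1, h2⟩)
        · left; constructor <;> linarith
        · right; constructor <;> linarith
    rw [← lintegral_shift h y (uIoc y (y + s)), hp]
  have heq1 : ∀ s ∈ Ioc (-(2⁻¹):ℝ) 2⁻¹, Φ (y + s) =
      (ENNReal.ofReal |s|) ^ (-(q+1)) * ∫⁻ τ in uIoc (0:ℝ) s, h (y + τ) := by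
    intro s hs
    simp only [hΦ]
    rw [hd s hs, show y + s - y = s by ring, wrap_eq_self hs, hinner s]
  have heq2 : ∀ s ∈ Ioc (-(2⁻¹):ℝ) 2⁻¹, Ψ (y + s) =
      (ENNReal.ofReal |s|) ^ (-q) * h (y + s) := by
    intro s hs
    simp only [hΨ]
    rw [hd s hs]
  rw [setLIntegral_congr_fun measurableSet_Ioc heq1,
    setLIntegral_congr_fun measurableSet_Ioc heq2]
  exact core hq (fun τ => h (y + τ)) (hm.comp (measurable_const_add y))


variable {n : ℕ} {q : ℝ} {u : ℝ → EuclideanSpace ℝ (Fin n)}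

lemma periodic_shift_eq {β : Type*} {f : ℝ → β} (hf : Function.Periodic f 1) (x y : ℝ) :
    f (y + wrap (x - y)) = f x := by
  have hk := wrap_sub_self (x - y)
  have hxx : y + wrap (x - y) = x - ((-⌊1/2 - (x - y)⌋ : ℤ) : ℝ) * 1 := by
    push_cast
    linarith [hk]
  rw [hxx]
  exact hf.sub_int_mul_eq (-⌊1/2 - (x - y)⌋)

lemma periodic_eq_of_circDist_zero {β : Type*} {f : ℝ → β} (hf : Function.Periodic f 1)
    {x y : ℝ} (hd : circDist x y = 0) : f x = f y := by
  have h0 : wrap (x - y) = 0 := by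
    have := circDist_eq_abs_wrap x y
    rw [hd] at this
    exact abs_eq_zero.mp this.symm
  rw [← periodic_shift_eq hf x y, h0, add_zero]

lemma deriv_periodic (hper : Function.Periodic u 1) : Function.Periodic (deriv u) 1 := by
  intro x
  have hfun : (fun t => u (t + 1)) = u := funext hper
  rw [← deriv_comp_add_const, hfun]

lemma linfD_ne_top (hC1 : ContDiff ℝ 1 u) (hper : Function.Periodic u 1) : linfD u ≠ ⊤ := by
  have hcd : Continuous (deriv u) := (hC1.iterate_deriv' 0 1).continuous
  have hdper : Function.Periodic (deriv u) 1 := deriv_periodic hper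
  obtain ⟨C, hC⟩ := (isCompact_Icc (a := (0:ℝ)) (b := 1)).exists_bound_of_continuousOn
    hcd.continuousOn
  have hbd : ∀ x : ℝ, ‖deriv u x‖ ≤ max C 0 := by
    intro x
    have h1 : deriv u (x - (⌊x⌋ : ℤ) * 1) = deriv u x := hdper.sub_int_mul_eq ⌊x⌋
    have h2 : x - (⌊x⌋ : ℤ) * 1 = Int.fract x := by rw [Int.fract]; push_cast; ring
    rw [← h1, h2]
    exact le_max_of_le_left (hC _ ⟨Int.fract_nonneg x, (Int.fract_lt_one x).le⟩)
  have : linfD u ≤ ENNReal.ofReal (max C 0) := by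
    apply iSup_le
    intro x
    rw [← enorm_eq_nnnorm, ← ofReal_norm]
    exact ENNReal.ofReal_le_ofReal (hbd x)
  exact ne_top_of_le_ne_top ENNReal.ofReal_ne_top this

lemma yint (hq : 2 < q) (hC1 : ContDiff ℝ 1 u) (hper : Function.Periodic u 1)
    (hemb : Embedded u) (hbil : bil u ≠ ⊤) (y : ℝ) :
    ∫⁻ x in Ioc (0:ℝ) 1,
        ENNReal.ofReal (wedgeSq (deriv u y) (u x - u y) ^ (q / 2) / ‖u x - u y‖ ^ (2 * q))
      ≤ bil u ^ (2 * q) * linfD u ^ q *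
        ∫⁻ x in Ioc (0:ℝ) 1,
          ENNReal.ofReal (‖deriv u x - deriv u y‖ ^ q / circDist x y ^ (1 + (1 - 1/q) * q)) := by
  have hq0 : (0:ℝ) < q := by linarith
  have hcd : Continuous (deriv u) := (hC1.iterate_deriv' 0 1).continuous
  have hdper : Function.Periodic (deriv u) 1 := deriv_periodic hper
  set K := bil u ^ (2 * q) * linfD u ^ q with hK
  have hKt : K ≠ ⊤ := ENNReal.mul_ne_top
    (ENNReal.rpow_ne_top_of_nonneg (by linarith) hbil)
    (ENNReal.rpow_ne_top_of_nonneg (by linarith) (linfD_ne_top hC1 hper))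
  set h : ℝ → ℝ≥0∞ := fun t => ENNReal.ofReal ‖deriv u t - deriv u y‖ ^ q with hh
  have hhm : Measurable h :=
    ((hcd.sub continuous_const).norm.measurable.ennreal_ofReal.pow_const _)
  have hhper : Function.Periodic h 1 := by
    intro t
    simp only [hh]
    rw [hdper t]
  have hpoint : ∀ x : ℝ,
      ENNReal.ofReal (wedgeSq (deriv u y) (u x - u y) ^ (q / 2) / ‖u x - u y‖ ^ (2 * q))
        ≤ K * ((ENNReal.ofReal (circDist x y)) ^ (-(q+1)) *
            ∫⁻ t in uIoc y (y + wrap (x - y)), h t) := by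
    intro x
    by_cases hd : circDist x y = 0
    · have huxy : u x = u y := periodic_eq_of_circDist_zero hper hd
      rw [huxy, sub_self, norm_zero, Real.zero_rpow (by positivity : 2 * q ≠ 0), div_zero,
        ENNReal.ofReal_zero]
      exact zero_le
    · exact pw hq hC1 hper hemb hd
  have hexp : 1 + (1 - 1/q) * q = q := by field_simp; ring
  have heq : ∀ x : ℝ,
      (ENNReal.ofReal (circDist x y)) ^ (-q) * h x =
      ENNReal.ofReal (‖deriv u x - deriv u y‖ ^ q / circDist x y ^ (1 + (1 - 1/q) * q)) := by
    intro x
    rw [hexp]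
    by_cases hd : circDist x y = 0
    · have hdd : deriv u x = deriv u y := periodic_eq_of_circDist_zero hdper hd
      simp only [hh]
      rw [hd, hdd, sub_self, norm_zero, ENNReal.ofReal_zero,
        ENNReal.zero_rpow_of_pos hq0, mul_zero, Real.zero_rpow (by positivity : q ≠ 0),
        div_zero, ENNReal.ofReal_zero]
    · have hd0 : 0 < circDist x y := lt_of_le_of_ne (norm_nonneg _) (Ne.symm hd)
      simp only [hh]
      rw [ENNReal.ofReal_div_of_pos (Real.rpow_pos_of_pos hd0 _),
        ENNReal.ofReal_rpow_of_nonneg (norm_nonneg _) hq0.le, div_eq_mul_inv,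
        ENNReal.rpow_neg, ENNReal.ofReal_rpow_of_pos hd0, mul_comm]
  calc ∫⁻ x in Ioc (0:ℝ) 1,
        ENNReal.ofReal (wedgeSq (deriv u y) (u x - u y) ^ (q / 2) / ‖u x - u y‖ ^ (2 * q))
      ≤ ∫⁻ x in Ioc (0:ℝ) 1, K * ((ENNReal.ofReal (circDist x y)) ^ (-(q+1)) *
            ∫⁻ t in uIoc y (y + wrap (x - y)), h t) := lintegral_mono hpoint
    _ = K * ∫⁻ x in Ioc (0:ℝ) 1, ((ENNReal.ofReal (circDist x y)) ^ (-(q+1)) *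
            ∫⁻ t in uIoc y (y + wrap (x - y)), h t) := lintegral_const_mul' _ _ hKt
    _ ≤ K * ∫⁻ x in Ioc (0:ℝ) 1, (ENNReal.ofReal (circDist x y)) ^ (-q) * h x :=
        mul_le_mul_right (xint (by linarith) y h hhm hhper) _
    _ = K * ∫⁻ x in Ioc (0:ℝ) 1,
          ENNReal.ofReal (‖deriv u x - deriv u y‖ ^ q / circDist x y ^ (1 + (1 - 1/q) * q)) := by
        rw [lintegral_congr heq]



/-- Energy estimate, Proposition 3.2 / eq. (3.4):
`TP(u) ≤ (1/q) (bil u)^{2q} ‖u'‖_{L^∞}^q [u']_{W^{1-1/q,q}}^q`. -/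
theorem tp_energy_estimate (n : ℕ) (q : ℝ) (hq : 2 < q)
    (u : ℝ → EuclideanSpace ℝ (Fin n))
    (hC1 : ContDiff ℝ 1 u) (hper : Function.Periodic u 1)
    (hemb : Embedded u) (hreg : Regular u)
    (hbil : bil u < ⊤) (hsem : sobSemPow (1 - 1 / q) q (deriv u) < ⊤) :
    TPe q u ≤ ENNReal.ofReal (1 / q) * bil u ^ (2 * q) * linfD u ^ q *
      sobSemPow (1 - 1 / q) q (deriv u) := by
  have hcu : Continuous u := hC1.continuous
  have hcd : Continuous (deriv u) := (hC1.iterate_deriv' 0 1).continuous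
  set K := bil u ^ (2 * q) * linfD u ^ q with hK
  have hKt : K ≠ ⊤ := ENNReal.mul_ne_top
    (ENNReal.rpow_ne_top_of_nonneg (by linarith) hbil.ne)
    (ENNReal.rpow_ne_top_of_nonneg (by linarith) (linfD_ne_top hC1 hper))
  -- measurability
  have hca : Continuous fun p : ℝ × ℝ => deriv u p.2 := hcd.comp continuous_snd
  have hcb : Continuous fun p : ℝ × ℝ => u p.1 - u p.2 :=
    (hcu.comp continuous_fst).sub (hcu.comp continuous_snd)
  have hwc : Continuous fun p : ℝ × ℝ => wedgeSq (deriv u p.2) (u p.1 - u p.2) := by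
    simp only [wedgeSq]
    exact ((hca.norm.pow 2).mul (hcb.norm.pow 2)).sub ((hca.inner hcb).pow 2)
  have hFm : Measurable fun p : ℝ × ℝ => ENNReal.ofReal
      (wedgeSq (deriv u p.2) (u p.1 - u p.2) ^ (q / 2) / ‖u p.1 - u p.2‖ ^ (2 * q)) := by
    exact ((hwc.measurable.pow_const _).div ((hcb.norm.measurable).pow_const _)).ennreal_ofReal
  have hcirc : Continuous fun p : ℝ × ℝ => circDist p.1 p.2 := by
    have : Continuous fun p : ℝ × ℝ => ((p.1 - p.2 : ℝ) : AddCircle (1:ℝ)) :=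
      (AddCircle.continuous_mk' 1).comp (continuous_fst.sub continuous_snd)
    exact this.norm
  have hSm : Measurable fun p : ℝ × ℝ => ENNReal.ofReal
      (‖deriv u p.1 - deriv u p.2‖ ^ q / circDist p.1 p.2 ^ (1 + (1 - 1/q) * q)) := by
    exact ((((hcd.comp continuous_fst).sub (hcd.comp continuous_snd)).norm.measurable.pow_const
      _).div ((hcirc.measurable).pow_const _)).ennreal_ofReal
  have hrestrict : volume.restrict unitSq =
      (volume.restrict (Ioc (0:ℝ) 1)).prod (volume.restrict (Ioc (0:ℝ) 1)) := by
    rw [unitSq, Measure.prod_restrict, ← Measure.volume_eq_prod]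
  have hmain : (∫⁻ p in unitSq, ENNReal.ofReal
      (wedgeSq (deriv u p.2) (u p.1 - u p.2) ^ (q / 2) / ‖u p.1 - u p.2‖ ^ (2 * q)))
      ≤ K * sobSemPow (1 - 1 / q) q (deriv u) := by
    rw [sobSemPow, hrestrict, lintegral_prod_symm _ (hFm.aemeasurable),
      lintegral_prod_symm _ (hSm.aemeasurable), ← lintegral_const_mul' _ _ hKt]
    exact lintegral_mono fun y => yint hq hC1 hper hemb hbil.ne y
  calc TPe q u ≤ ENNReal.ofReal (1 / q) * (K * sobSemPow (1 - 1 / q) q (deriv u)) :=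
        mul_le_mul_right hmain _
    _ = ENNReal.ofReal (1 / q) * bil u ^ (2 * q) * linfD u ^ q *
        sobSemPow (1 - 1 / q) q (deriv u) := by rw [hK]; ring
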